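/- arXiv:1210.5575 — 2 statements merged into one kernel-verified Lean document; each statement's English description precedes it below -/
import Mathlib

section
/- On the reference tetrahedron K³, each face bubble function Φ^{f_{j1}}_{m,n} = C_m^n λ_{j2} λ_{j3} λ_{j4} (1−λ_{j2})^m (1−λ_{j2}−λ_{j3})^n P_m^{(2n+3,2)}(2λ_{j3}/(1−λ_{j2}) − 1) P_n^{(0,2)}(2λ_{j4}/(1−λ_{j2}−λ_{j3}) − 1) (∇λ_{j3} × ∇λ_{j4})/|∇λ_{j3} × ∇λ_{j4}| (m,n ≥ 0) satisfies: (i) it vanishes at every point of each of the six edges of K³; and (ii) its normal component vanishes on the other three faces, i.e. for every jk ≠ j1, n^{f_{jk}} · Φ^{f_{j1}}_{m,n} = 0 at every point of the face f_{jk}. -/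
open MeasureTheory
open scoped BigOperators

noncomputable section

/-- Vertices of the reference tetrahedron:
`v0 = (0,0,0)`, `v1 = (1,0,0)`, `v2 = (0,1,0)`, `v3 = (0,0,1)`. -/
def vtx : Fin 4 → Fin 3 → ℝ := ![![0,0,0], ![1,0,0], ![0,1,0], ![0,0,1]]

/-- Barycentric coordinates `λ0 = 1−ξ−η−ζ`, `λ1 = ξ`, `λ2 = η`, `λ3 = ζ`. -/
def lam : Fin 4 → (Fin 3 → ℝ) → ℝ :=
  ![fun p => 1 - p 0 - p 1 - p 2, fun p => p 0, fun p => p 1, fun p => p 2]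

/-- The (constant) gradients `∇λ_i`. -/
def gradLam : Fin 4 → Fin 3 → ℝ := ![![-1,-1,-1], ![1,0,0], ![0,1,0], ![0,0,1]]

/-- The reference tetrahedron `K³ = {(ξ,η,ζ) : ξ,η,ζ ≥ 0, ξ+η+ζ ≤ 1}`. -/
def K3 : Set (Fin 3 → ℝ) := {p | 0 ≤ p 0 ∧ 0 ≤ p 1 ∧ 0 ≤ p 2 ∧ p 0 + p 1 + p 2 ≤ 1}

/-- Cross product in ℝ³. -/
def cross3 (u v : Fin 3 → ℝ) : Fin 3 → ℝ :=
  ![u 1 * v 2 - u 2 * v 1, u 2 * v 0 - u 0 * v 2, u 0 * v 1 - u 1 * v 0]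

/-- Euclidean norm in ℝ³. -/
def norm3 (u : Fin 3 → ℝ) : ℝ := Real.sqrt (∑ i, u i ^ 2)

/-- Euclidean dot product in ℝ³. -/
def dot3 (u v : Fin 3 → ℝ) : ℝ := ∑ i, u i * v i

/-- The unit vector in the direction of `u`. -/
def unitV (u : Fin 3 → ℝ) : Fin 3 → ℝ := (norm3 u)⁻¹ • u

/-- The outward unit normal of the face `f_j` of `K³` opposite the vertex
`v_j` (that face lies in the plane `λ_j = 0`): `n^{f_j} = −∇λ_j / |∇λ_j|`. -/
def nFace (j : Fin 4) : Fin 3 → ℝ := (norm3 (gradLam j))⁻¹ • (-(gradLam j))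

/-- The classical (un-normalized) Jacobi polynomial `P_n^{(a,b)}` in homogenized
(cleared-denominator) form: `jacobiHom n a b u w = w^n P_n^{(a,b)}(u/w)` for
`w ≠ 0`, via the explicit sum
`P_n^{(a,b)}(x) = ∑_{s} C(n+a, n−s) C(n+b, s) ((x−1)/2)^s ((x+1)/2)^{n−s}`. -/
def jacobiHom (n a b : ℕ) (u w : ℝ) : ℝ :=
  ∑ k ∈ Finset.range (n+1),
    (((n+a).choose (n-k) : ℝ)) * (((n+b).choose k : ℝ)) *
      ((u - w)/2)^k * ((u + w)/2)^(n-k)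

/-- The degree-`n` Legendre polynomial `ℓ_n` (normalized so `ℓ_n(1) = 1`). -/
def legendre (n : ℕ) (x : ℝ) : ℝ := jacobiHom n 0 0 x 1

/-- Normalization constant
`C_m^n = √((2n+3)(m+n+3)(m+2n+4)(m+2n+5)(2m+2n+7)(2m+2n+8)(2m+2n+9)) / √((m+1)(m+2))`. -/
def Cmn (m n : ℕ) : ℝ :=
  Real.sqrt
    (((2*n+3)*(m+n+3)*(m+2*n+4)*(m+2*n+5)*(2*m+2*n+7)*(2*m+2*n+8)*(2*m+2*n+9) : ℕ) : ℝ) /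
  Real.sqrt (((m+1)*(m+2) : ℕ) : ℝ)

/-- Face bubble function
`Φ^{f_{j1}}_{m,n} = C_m^n λ_{j2} λ_{j3} λ_{j4} (1−λ_{j2})^m (1−λ_{j2}−λ_{j3})^n
P_m^{(2n+3,2)}(2λ_{j3}/(1−λ_{j2}) − 1) P_n^{(0,2)}(2λ_{j4}/(1−λ_{j2}−λ_{j3}) − 1)
(∇λ_{j3} × ∇λ_{j4})/|∇λ_{j3} × ∇λ_{j4}|`. -/
def faceBub (j2 j3 j4 : Fin 4) (m n : ℕ) (p : Fin 3 → ℝ) : Fin 3 → ℝ :=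
  (Cmn m n * lam j2 p * lam j3 p * lam j4 p *
    jacobiHom m (2*n+3) 2 (2 * lam j3 p - (1 - lam j2 p)) (1 - lam j2 p) *
    jacobiHom n 0 2 (2 * lam j4 p - (1 - lam j2 p - lam j3 p))
      (1 - lam j2 p - lam j3 p)) •
  unitV (cross3 (gradLam j3) (gradLam j4))

lemma lam_affine (j : Fin 4) (u w : ℝ) (p q : Fin 3 → ℝ) (h : u + w = 1) :
    lam j (u • p + w • q) = u * lam j p + w * lam j q := by
  have hw : w = 1 - u := by linarith
  subst hw
  fin_cases j <;> simp [lam] <;> ring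

lemma lam_vtx_zero (j a : Fin 4) (h : j ≠ a) : lam j (vtx a) = 0 := by
  fin_cases j <;> fin_cases a <;> simp_all [lam, vtx, Matrix.vecHead, Matrix.vecTail]

lemma faceBub_eq_zero (j2 j3 j4 : Fin 4) (m n : ℕ) (p : Fin 3 → ℝ)
    (h : lam j2 p = 0 ∨ lam j3 p = 0 ∨ lam j4 p = 0) :
    faceBub j2 j3 j4 m n p = 0 := by
  unfold faceBub
  rcases h with h | h | h <;> rw [h] <;>
    simp [mul_comm, mul_assoc, mul_left_comm]

lemma dot3_zero (u : Fin 3 → ℝ) : dot3 u 0 = 0 := by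
  simp [dot3]

lemma edge_cover : ∀ j1 j2 j3 j4 a b : Fin 4, j2 ≠ j1 → j3 ≠ j1 → j4 ≠ j1 →
    j2 < j3 → j3 < j4 → a < b →
    (j2 ≠ a ∧ j2 ≠ b) ∨ (j3 ≠ a ∧ j3 ≠ b) ∨ (j4 ≠ a ∧ j4 ≠ b) := by decide

lemma face_cover : ∀ j1 j2 j3 j4 jk : Fin 4, j2 ≠ j1 → j3 ≠ j1 → j4 ≠ j1 →
    j2 < j3 → j3 < j4 → jk ≠ j1 → jk = j2 ∨ jk = j3 ∨ jk = j4 := by decide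

lemma lam_seg_zero (j a b : Fin 4) (ha : j ≠ a) (hb : j ≠ b)
    (p : Fin 3 → ℝ) (hp : p ∈ segment ℝ (vtx a) (vtx b)) : lam j p = 0 := by
  obtain ⟨u, w, _, _, huw, rfl⟩ := hp
  rw [lam_affine j u w _ _ huw, lam_vtx_zero j a ha, lam_vtx_zero j b hb]
  ring

/-- each face bubble function attached to the face
`f_{j1} = [j2,j3,j4]` (i) vanishes at every point of each of the six edges of
`K³`, and (ii) has vanishing normal component at every point of every face
`f_{jk}` with `jk ≠ j1`. -/
theorem stmt13 : ∀ (j1 j2 j3 j4 : Fin 4), j2 ≠ j1 → j3 ≠ j1 → j4 ≠ j1 →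
    j2 < j3 → j3 < j4 → ∀ m n : ℕ,
    (∀ (a b : Fin 4), a < b → ∀ p ∈ segment ℝ (vtx a) (vtx b),
      faceBub j2 j3 j4 m n p = 0) ∧
    (∀ jk : Fin 4, jk ≠ j1 → ∀ p ∈ K3, lam jk p = 0 →
      dot3 (nFace jk) (faceBub j2 j3 j4 m n p) = 0) := by
  intro j1 j2 j3 j4 h2 h3 h4 h23 h34 m n
  constructor
  · intro a b hab p hp
    apply faceBub_eq_zero
    rcases edge_cover j1 j2 j3 j4 a b h2 h3 h4 h23 h34 hab with ⟨ha, hb⟩ | ⟨ha, hb⟩ | ⟨ha, hb⟩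
    · exact Or.inl (lam_seg_zero _ _ _ ha hb p hp)
    · exact Or.inr (Or.inl (lam_seg_zero _ _ _ ha hb p hp))
    · exact Or.inr (Or.inr (lam_seg_zero _ _ _ ha hb p hp))
  · intro jk hjk p _ hlam
    rw [faceBub_eq_zero, dot3_zero]
    rcases face_cover j1 j2 j3 j4 jk h2 h3 h4 h23 h34 hjk with rfl | rfl | rfl
    · exact Or.inl hlam
    · exact Or.inr (Or.inl hlam)
    · exact Or.inr (Or.inr hlam)
end
end

section
/- On the reference tetrahedron K³, for each edge e_k = [k1,k2] and each integer i ≥ 0, the edge-based interior function Φ^{t,i}_{e[k1,k2]} = C_i λ_{k1} λ_{k2} (1−λ_{k1})^i P_i^{(1,2)}(2λ_{k2}/(1−λ_{k1}) − 1) τ^{e_k}/|τ^{e_k}| (with C_i = (i+3)√((2i+4)(2i+5)(2i+7)/(i+1))) satisfies: (i) its normal component vanishes at every point of each of the four faces of K³, i.e. n^{f_j} · Φ^{t,i}_{e[k1,k2]} = 0 on f_j for every j ∈ {0,1,2,3}; and (ii) its tangential component vanishes on the other five edges, i.e. τ^{e_j} · Φ^{t,i}_{e[k1,k2]} = 0 at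 every point of the edge e_j whenever e_j ≠ e_k. -/
open MeasureTheory
open scoped BigOperators

noncomputable section

/-- Normalization constant `C_i = (i+3)√((2i+4)(2i+5)(2i+7)/(i+1))`. -/
def CEdgeTet (i : ℕ) : ℝ :=
  ((i : ℝ) + 3) * Real.sqrt ((((2*i+4)*(2*i+5)*(2*i+7) : ℕ) : ℝ) / ((i : ℝ) + 1))

/-- Edge-based interior function of the tetrahedral element
`Φ^{t,i}_{e[k1,k2]} = C_i λ_{k1} λ_{k2} (1−λ_{k1})^i P_i^{(1,2)}(2λ_{k2}/(1−λ_{k1}) − 1)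
τ^{e_k}/|τ^{e_k}|`. -/
def PhiEdgeTet (k1 k2 : Fin 4) (i : ℕ) (p : Fin 3 → ℝ) : Fin 3 → ℝ :=
  (CEdgeTet i * lam k1 p * lam k2 p *
    jacobiHom i 1 2 (2 * lam k2 p - (1 - lam k1 p)) (1 - lam k1 p)) •
  unitV (vtx k2 - vtx k1)

lemma dot3_smul_right (v u : Fin 3 → ℝ) (c : ℝ) : dot3 v (c • u) = c * dot3 v u := by
  simp [dot3, Finset.mul_sum, Fin.sum_univ_three]; ring

lemma dot3_smul_left (v u : Fin 3 → ℝ) (c : ℝ) : dot3 (c • v) u = c * dot3 v u := by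
  simp [dot3, Finset.mul_sum, Fin.sum_univ_three]; ring

lemma dot3_gradLam (j k1 k2 : Fin 4) (h1 : j ≠ k1) (h2 : j ≠ k2) :
    dot3 (gradLam j) (vtx k2 - vtx k1) = 0 := by
  fin_cases j <;> fin_cases k1 <;> fin_cases k2 <;>
    simp_all [dot3, gradLam, vtx, Fin.sum_univ_three] <;> norm_num

lemma lam_seg (m j1 j2 : Fin 4) (h1 : m ≠ j1) (h2 : m ≠ j2) (a b : ℝ) (hab : a + b = 1) :
    lam m (a • vtx j1 + b • vtx j2) = 0 := by
  fin_cases m <;> fin_cases j1 <;> fin_cases j2 <;>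
    simp_all [lam, vtx, Matrix.vecHead, Matrix.vecTail] <;> linarith

lemma key_cases : ∀ k1 k2 j1 j2 : Fin 4, k1 < k2 → j1 < j2 → (j1, j2) ≠ (k1, k2) →
    (k1 ≠ j1 ∧ k1 ≠ j2) ∨ (k2 ≠ j1 ∧ k2 ≠ j2) := by decide

/-- each edge-based interior function of the tetrahedral element
(i) has vanishing normal component at every point of each of the four faces of
`K³`, and (ii) has vanishing tangential component at every point of each edge
other than its associated edge `e_k = [k1,k2]`. -/
theorem stmt15 : ∀ (k1 k2 : Fin 4), k1 < k2 → ∀ i : ℕ,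
    (∀ j : Fin 4, ∀ p ∈ K3, lam j p = 0 →
      dot3 (nFace j) (PhiEdgeTet k1 k2 i p) = 0) ∧
    (∀ (j1 j2 : Fin 4), j1 < j2 → (j1, j2) ≠ (k1, k2) →
      ∀ p ∈ segment ℝ (vtx j1) (vtx j2),
        dot3 (vtx j2 - vtx j1) (PhiEdgeTet k1 k2 i p) = 0) := by
  intro k1 k2 hk i
  constructor
  · intro j p _ hj
    unfold PhiEdgeTet
    rw [dot3_smul_right]
    by_cases h1 : j = k1
    · subst h1; rw [hj]; ring
    by_cases h2 : j = k2
    · subst h2; rw [hj]; ring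
    · have : dot3 (nFace j) (unitV (vtx k2 - vtx k1)) = 0 := by
        unfold nFace unitV
        rw [dot3_smul_right]
        have : dot3 (-(gradLam j)) (vtx k2 - vtx k1) = 0 := by
          have h := dot3_gradLam j k1 k2 h1 h2
          simp [dot3, Fin.sum_univ_three] at h ⊢
          linarith
        rw [dot3_smul_left, this]; ring
      rw [this]; ring
  · intro j1 j2 hj hne p hp
    obtain ⟨a, b, ha, hb, hab, rfl⟩ := hp
    have key := key_cases k1 k2 j1 j2 hk hj hne
    unfold PhiEdgeTet
    rw [dot3_smul_right]
    rcases key with ⟨h1, h2⟩ | ⟨h1, h2⟩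
    · rw [lam_seg k1 j1 j2 h1 h2 a b hab]; ring
    · rw [lam_seg k2 j1 j2 h1 h2 a b hab]; ring
end
end
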